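/- arXiv:math-ph/9903002 — 4 statements merged into one kernel-verified Lean document; each statement's English description precedes it below -/
import Mathlib

section
/- Let Λ be a finite set with |Λ| ≥ 2. Let {x_A : A ⊆ Λ} be real numbers with x_∅ = 0 and ∑_{B⊆A} x_B ≥ 0 for every A ⊆ Λ, and let {y_a : a ∈ Λ} ⊆ [0,1], with y_A := ∏_{a∈A} y_a (and y_∅ = 1). Then ∑_{A⊆Λ} x_A y_A (1 − y_{Λ∖A}) ≥ ∑_{a∈Λ} x_{{a}} y_a ∏_{b∈Λ∖{a}} (1 − y_b) ≥ 0. -/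
open Finset

/-- Inequality (ineq1) of Lemma 2: for a finite set `Λ` with `|Λ| ≥ 2`, coefficients
`x_A` (for `A ⊆ Λ`) with `x_∅ = 0` and `∑_{B ⊆ A} x_B ≥ 0` for all `A ⊆ Λ`, and
`y_a ∈ [0,1]` for `a ∈ Λ`, with `y_A = ∏_{a ∈ A} y_a`,
`∑_{A ⊆ Λ} x_A y_A (1 - y_{Λ∖A}) ≥ ∑_{a ∈ Λ} x_{{a}} y_a ∏_{b ∈ Λ∖{a}} (1 - y_b) ≥ 0`. -/
theorem stretched_exp_lemma2_ineq1 {α : Type*} [DecidableEq α] (Λ : Finset α)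
    (hΛ : 2 ≤ Λ.card) (x : Finset α → ℝ) (y : α → ℝ)
    (hx0 : x ∅ = 0)
    (hx : ∀ A ⊆ Λ, 0 ≤ ∑ B ∈ A.powerset, x B)
    (hy : ∀ a ∈ Λ, y a ∈ Set.Icc (0 : ℝ) 1) :
    ∑ A ∈ Λ.powerset, x A * (∏ a ∈ A, y a) * (1 - ∏ b ∈ Λ \ A, y b)
        ≥ ∑ a ∈ Λ, x {a} * y a * ∏ b ∈ Λ \ {a}, (1 - y b) ∧
      0 ≤ ∑ a ∈ Λ, x {a} * y a * ∏ b ∈ Λ \ {a}, (1 - y b) := by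
  set f : Finset α → ℝ := fun T =>
    (∏ b ∈ T, (1 - y b)) * (∏ a ∈ Λ \ T, y a) * (∑ B ∈ (Λ \ T).powerset, x B) with hfdef
  -- nonnegativity of f on subsets of Λ
  have hfnn : ∀ T ∈ Λ.powerset, 0 ≤ f T := by
    intro T hT
    rw [Finset.mem_powerset] at hT
    apply mul_nonneg
    · apply mul_nonneg
      · exact Finset.prod_nonneg fun b hb => by
          have := (hy b (hT hb)).2; linarith
      · exact Finset.prod_nonneg fun a ha =>
          (hy a (Finset.mem_sdiff.mp ha).1).1
    · exact hx _ Finset.sdiff_subset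
  have hps : ∀ a ∈ Λ, ∑ B ∈ ({a} : Finset α).powerset, x B = x {a} := by
    intro a _
    rw [show ({a} : Finset α) = insert a ∅ from rfl,
      Finset.sum_powerset_insert (by simp) x]
    simp [hx0]
  -- key identity: ∑_{A⊆Λ} x A ∏_A y = ∑_{T⊆Λ} f T
  have key : ∑ A ∈ Λ.powerset, x A * ∏ a ∈ A, y a = ∑ T ∈ Λ.powerset, f T := by
    have step1 : ∀ A ∈ Λ.powerset,
        x A * ∏ a ∈ A, y a
          = ∑ T ∈ (Λ \ A).powerset, x A * ((∏ b ∈ T, (1 - y b)) * ∏ a ∈ Λ \ T, y a) := by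
      intro A hA
      rw [Finset.mem_powerset] at hA
      have hone : (1 : ℝ) = ∑ T ∈ (Λ \ A).powerset,
          (∏ b ∈ T, (1 - y b)) * ∏ a ∈ (Λ \ A) \ T, y a := by
        have := Finset.prod_add (fun b => (1 : ℝ) - y b) y (Λ \ A)
        simpa using this
      calc x A * ∏ a ∈ A, y a
          = (x A * ∏ a ∈ A, y a) * ∑ T ∈ (Λ \ A).powerset,
              (∏ b ∈ T, (1 - y b)) * ∏ a ∈ (Λ \ A) \ T, y a := by
            rw [← hone, mul_one]
        _ = ∑ T ∈ (Λ \ A).powerset,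
              (x A * ∏ a ∈ A, y a) * ((∏ b ∈ T, (1 - y b)) * ∏ a ∈ (Λ \ A) \ T, y a) :=
            Finset.mul_sum _ _ _
        _ = _ := by
            apply Finset.sum_congr rfl
            intro T hT
            rw [Finset.mem_powerset] at hT
            have hunion : A ∪ ((Λ \ A) \ T) = Λ \ T := by
              ext b
              simp only [Finset.mem_union, Finset.mem_sdiff]
              constructor
              · rintro (hb | ⟨⟨h1, _⟩, h3⟩)
                · refine ⟨hA hb, fun hbT => ?_⟩
                  exact (Finset.mem_sdiff.mp (hT hbT)).2 hb
                · exact ⟨h1, h3⟩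
              · rintro ⟨hbΛ, hbT⟩
                by_cases hbA : b ∈ A
                · exact Or.inl hbA
                · exact Or.inr ⟨⟨hbΛ, hbA⟩, hbT⟩
            have hdisj : Disjoint A ((Λ \ A) \ T) :=
              (Finset.sdiff_disjoint.mono_left Finset.sdiff_subset).symm
            rw [← hunion, Finset.prod_union hdisj]
            generalize (∏ b ∈ T, (1 - y b)) = PT
            generalize (∏ a ∈ A, y a) = PA
            generalize (∏ a ∈ (Λ \ A) \ T, y a) = PB
            ring
    rw [Finset.sum_congr rfl step1]
    rw [Finset.sum_comm' (t' := Λ.powerset) (s' := fun T => (Λ \ T).powerset) ?_]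
    · apply Finset.sum_congr rfl
      intro T _
      rw [hfdef, ← Finset.sum_mul, mul_comm]
    · intro A T
      simp only [Finset.mem_powerset, Finset.subset_sdiff]
      constructor
      · rintro ⟨h1, h2, h3⟩
        exact ⟨⟨h1, h3.symm⟩, h2⟩
      · rintro ⟨⟨h1, h3⟩, h2⟩
        exact ⟨h1, h2, h3.symm⟩
  -- LHS rewritten
  have lhs_eq : ∑ A ∈ Λ.powerset, x A * (∏ a ∈ A, y a) * (1 - ∏ b ∈ Λ \ A, y b)
      = ∑ T ∈ Λ.powerset.erase ∅, f T := by
    have expand : ∀ A ∈ Λ.powerset,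
        x A * (∏ a ∈ A, y a) * (1 - ∏ b ∈ Λ \ A, y b)
          = x A * ∏ a ∈ A, y a - x A * ∏ b ∈ Λ, y b := by
      intro A hA
      rw [Finset.mem_powerset] at hA
      rw [← Finset.prod_sdiff hA]
      ring
    rw [Finset.sum_congr rfl expand, Finset.sum_sub_distrib, key, ← Finset.sum_mul]
    have hempty : (∅ : Finset α) ∈ Λ.powerset := by simp
    have := Finset.add_sum_erase Λ.powerset f hempty
    have hf0 : f ∅ = (∑ B ∈ Λ.powerset, x B) * ∏ b ∈ Λ, y b := by
      rw [hfdef]; simp [mul_comm]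
    linarith
  -- f at Λ \ {a}
  have fval : ∀ a ∈ Λ, f (Λ \ {a}) = x {a} * y a * ∏ b ∈ Λ \ {a}, (1 - y b) := by
    intro a ha
    have h1 : Λ \ (Λ \ {a}) = {a} := by
      rw [Finset.sdiff_sdiff_self_left]
      exact Finset.inter_eq_right.mpr (Finset.singleton_subset_iff.mpr ha)
    rw [hfdef]
    simp only [h1, Finset.prod_singleton]
    rw [hps a ha]
    ring
  -- middle sum
  have mid_eq : ∑ a ∈ Λ, x {a} * y a * ∏ b ∈ Λ \ {a}, (1 - y b)
      = ∑ T ∈ Λ.image (fun a => Λ \ {a}), f T := by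
    rw [Finset.sum_image ?_]
    · exact (Finset.sum_congr rfl fval).symm
    · intro a ha b hb h
      by_contra hne
      have : a ∈ Λ \ {b} := Finset.mem_sdiff.mpr ⟨ha, by simpa using hne⟩
      rw [← (show Λ \ {a} = Λ \ {b} from h)] at this
      exact (Finset.mem_sdiff.mp this).2 (Finset.mem_singleton_self a)
  have hsub : Λ.image (fun a => Λ \ {a}) ⊆ Λ.powerset.erase ∅ := by
    intro T hT
    obtain ⟨a, ha, rfl⟩ := Finset.mem_image.mp hT
    refine Finset.mem_erase.mpr ⟨?_, Finset.mem_powerset.mpr Finset.sdiff_subset⟩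
    intro h
    have hcard : (Λ \ {a}).card = Λ.card - 1 := by
      rw [Finset.sdiff_singleton_eq_erase, Finset.card_erase_of_mem ha]
    rw [h, Finset.card_empty] at hcard
    omega
  constructor
  · rw [lhs_eq, mid_eq]
    exact Finset.sum_le_sum_of_subset_of_nonneg hsub fun T hT _ =>
      hfnn T (Finset.mem_of_mem_erase hT)
  · apply Finset.sum_nonneg
    intro a ha
    have hxa : 0 ≤ x {a} := by
      have := hx {a} (Finset.singleton_subset_iff.mpr ha)
      rwa [hps a ha] at this
    apply mul_nonneg (mul_nonneg hxa (hy a ha).1)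
    exact Finset.prod_nonneg fun b hb => by
      have := (hy b (Finset.mem_sdiff.mp hb).1).2; linarith
end

section
/- Let Λ be a finite nonempty set. Let {x_A : A ⊆ Λ} be real numbers with x_∅ = 0 and ∑_{B⊆A} x_B ≥ 0 for every A ⊆ Λ, and let {y_a : a ∈ Λ} ⊆ [0,1], with y_A := ∏_{a∈A} y_a (and y_∅ = 1). Then ∑_{A⊆Λ} x_A y_A ≥ (∑_{A⊆Λ} x_A) · y_Λ. -/
open Finset

lemma aux_ineq2 {α : Type*} [DecidableEq α] (Λ : Finset α) (x : Finset α → ℝ) (y : α → ℝ)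
    (hx : ∀ A ⊆ Λ, 0 ≤ ∑ B ∈ A.powerset, x B)
    (hy : ∀ a ∈ Λ, y a ∈ Set.Icc (0 : ℝ) 1) :
    (∑ A ∈ Λ.powerset, x A) * ∏ a ∈ Λ, y a
      ≤ ∑ A ∈ Λ.powerset, x A * ∏ a ∈ A, y a := by
  induction Λ using Finset.induction_on generalizing x with
  | empty => simp
  | @insert a s ha ih =>
    obtain ⟨hy0, hy1⟩ := hy a (mem_insert_self a s)
    have hy' : ∀ b ∈ s, y b ∈ Set.Icc (0:ℝ) 1 := fun b hb => hy b (mem_insert_of_mem hb)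
    have hP : 0 ≤ ∏ b ∈ s, y b := Finset.prod_nonneg fun b hb => (hy' b hb).1
    set x' : Finset α → ℝ := fun B => x B + y a * x (insert a B) with hx'def
    have hx' : ∀ A ⊆ s, 0 ≤ ∑ B ∈ A.powerset, x' B := by
      intro A hA
      have h1 : 0 ≤ ∑ B ∈ A.powerset, x B := hx A (hA.trans (subset_insert a s))
      have h2 : 0 ≤ ∑ B ∈ (insert a A).powerset, x B :=
        hx (insert a A) (insert_subset_insert a hA)
      have haA : a ∉ A := fun h => ha (hA h)
      rw [Finset.sum_powerset_insert haA] at h2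
      have hsum : ∑ B ∈ A.powerset, x' B
          = ∑ B ∈ A.powerset, x B + y a * ∑ B ∈ A.powerset, x (insert a B) := by
        simp [hx'def, Finset.sum_add_distrib, Finset.mul_sum]
      rw [hsum]
      nlinarith
    have key := ih x' hx' hy'
    have hS : 0 ≤ ∑ B ∈ s.powerset, x B := hx s (subset_insert a s)
    rw [Finset.sum_powerset_insert ha, Finset.sum_powerset_insert ha,
      Finset.prod_insert ha]
    have hprod : ∀ B ∈ s.powerset, x (insert a B) * ∏ b ∈ insert a B, y b
        = y a * (x (insert a B) * ∏ b ∈ B, y b) := by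
      intro B hB
      rw [Finset.prod_insert (fun h => ha (mem_powerset.mp hB h))]
      ring
    rw [Finset.sum_congr rfl hprod]
    have expand : ∑ B ∈ s.powerset, x' B * ∏ b ∈ B, y b
        = ∑ B ∈ s.powerset, x B * ∏ b ∈ B, y b
          + ∑ B ∈ s.powerset, y a * (x (insert a B) * ∏ b ∈ B, y b) := by
      rw [← Finset.sum_add_distrib]
      exact Finset.sum_congr rfl fun B hB => by simp only [hx'def]; ring
    have expand2 : ∑ B ∈ s.powerset, x' B
        = ∑ B ∈ s.powerset, x B + y a * ∑ B ∈ s.powerset, x (insert a B) := by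
      simp [hx'def, Finset.sum_add_distrib, Finset.mul_sum]
    rw [expand, expand2] at key
    set S := ∑ B ∈ s.powerset, x B
    set T := ∑ B ∈ s.powerset, x (insert a B)
    set P := ∏ b ∈ s, y b
    calc (S + T) * (y a * P) ≤ (S + y a * T) * P := by nlinarith [mul_nonneg (mul_nonneg hS (sub_nonneg.mpr hy1)) hP]
      _ ≤ _ := key

/-- Inequality (ineq2) of Lemma 2: for a finite nonempty set `Λ`, coefficients
`x_A` (for `A ⊆ Λ`) with `x_∅ = 0` and `∑_{B ⊆ A} x_B ≥ 0` for all `A ⊆ Λ`, and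
`y_a ∈ [0,1]` for `a ∈ Λ`, with `y_A = ∏_{a ∈ A} y_a`,
`∑_{A ⊆ Λ} x_A y_A ≥ (∑_{A ⊆ Λ} x_A) · y_Λ`. -/
theorem stretched_exp_lemma2_ineq2 {α : Type*} [DecidableEq α] (Λ : Finset α)
    (hΛ : Λ.Nonempty) (x : Finset α → ℝ) (y : α → ℝ)
    (hx0 : x ∅ = 0)
    (hx : ∀ A ⊆ Λ, 0 ≤ ∑ B ∈ A.powerset, x B)
    (hy : ∀ a ∈ Λ, y a ∈ Set.Icc (0 : ℝ) 1) :
    ∑ A ∈ Λ.powerset, x A * ∏ a ∈ A, y a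
      ≥ (∑ A ∈ Λ.powerset, x A) * ∏ a ∈ Λ, y a := by
  exact aux_ineq2 Λ x y hx hy
end

section
/- Let Λ be a finite set. Let {x_A : A ⊆ Λ} be real numbers with x_∅ = 0, let {y_a : a ∈ Λ} be real numbers, and set y_A := ∏_{a∈A} y_a (with y_∅ = 1) and z_B := ∑_{C⊆B} x_C for B ⊆ Λ. Then ∑_{A⊆Λ} x_A y_A (1 − y_{Λ∖A}) = ∑_{B : ∅ ≠ B ⊊ Λ} z_B y_B ∏_{a∈Λ∖B} (1 − y_a), where the sum on the right is over nonempty proper subsets B of Λ. -/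
open Finset

lemma aux_prod_one {α : Type*} [DecidableEq α] (S : Finset α) (y : α → ℝ) :
    ∑ t ∈ S.powerset, (∏ a ∈ t, y a) * ∏ a ∈ S \ t, (1 - y a) = 1 := by
  rw [← Finset.prod_add]; simp

lemma aux_inner {α : Type*} [DecidableEq α] (Λ C : Finset α) (hC : C ⊆ Λ) (y : α → ℝ) :
    ∑ B ∈ Λ.powerset.filter (fun B => C ⊆ B),
      (∏ a ∈ B, y a) * ∏ a ∈ Λ \ B, (1 - y a) = ∏ a ∈ C, y a := by
  have := Finset.sum_nbij' (i := fun B => B \ C) (j := fun D => C ∪ D)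
    (s := Λ.powerset.filter (fun B => C ⊆ B)) (t := (Λ \ C).powerset)
    (f := fun B => (∏ a ∈ B, y a) * ∏ a ∈ Λ \ B, (1 - y a))
    (g := fun D => (∏ a ∈ C, y a) * ((∏ a ∈ D, y a) * ∏ a ∈ (Λ \ C) \ D, (1 - y a)))
    ?_ ?_ ?_ ?_ ?_
  · rw [this, ← Finset.mul_sum, aux_prod_one, mul_one]
  · intro B hB
    simp only [mem_filter, mem_powerset] at hB ⊢
    exact sdiff_subset_sdiff hB.1 le_rfl
  · intro D hD
    simp only [mem_powerset] at hD
    simp only [mem_filter, mem_powerset]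
    exact ⟨union_subset hC (hD.trans sdiff_subset), subset_union_left⟩
  · intro B hB
    simp only [mem_filter, mem_powerset] at hB
    exact union_sdiff_of_subset hB.2
  · intro D hD
    simp only [mem_powerset] at hD
    have : Disjoint C D := disjoint_sdiff.mono_right hD
    rw [union_sdiff_cancel_left this]
  · intro B hB
    simp only [mem_filter, mem_powerset] at hB
    have h1 : Disjoint C (B \ C) := disjoint_sdiff
    have h2 : C ∪ (B \ C) = B := union_sdiff_of_subset hB.2
    rw [← mul_assoc, ← Finset.prod_union h1, h2]
    congr 2
    rw [sdiff_sdiff]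
    congr 1
    simpa using h2

/-- The key algebraic identity in the proof of Lemma 2: with `x_∅ = 0`,
`z_B = ∑_{C ⊆ B} x_C` and `y_A = ∏_{a ∈ A} y_a`,
`∑_{A ⊆ Λ} x_A y_A (1 - y_{Λ∖A}) = ∑_{∅ ≠ B ⊊ Λ} z_B y_B ∏_{a ∈ Λ∖B} (1 - y_a)`. -/
theorem stretched_exp_lemma2_identity {α : Type*} [DecidableEq α] (Λ : Finset α)
    (x : Finset α → ℝ) (y : α → ℝ) (hx0 : x ∅ = 0)
    (z : Finset α → ℝ) (hz : ∀ B ⊆ Λ, z B = ∑ C ∈ B.powerset, x C) :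
    ∑ A ∈ Λ.powerset, x A * (∏ a ∈ A, y a) * (1 - ∏ b ∈ Λ \ A, y b)
      = ∑ B ∈ Λ.powerset.filter (fun B => B ≠ ∅ ∧ B ≠ Λ),
          z B * (∏ a ∈ B, y a) * ∏ a ∈ Λ \ B, (1 - y a) := by
  set f : Finset α → ℝ := fun B => z B * (∏ a ∈ B, y a) * ∏ a ∈ Λ \ B, (1 - y a) with hf
  have hLHS : ∑ A ∈ Λ.powerset, x A * (∏ a ∈ A, y a) * (1 - ∏ b ∈ Λ \ A, y b)
      = (∑ A ∈ Λ.powerset, x A * ∏ a ∈ A, y a) - z Λ * ∏ a ∈ Λ, y a := by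
    rw [hz Λ subset_rfl, Finset.sum_mul, ← Finset.sum_sub_distrib]
    refine Finset.sum_congr rfl fun A hA => ?_
    have hA' : A ⊆ Λ := Finset.mem_powerset.mp hA
    have : (∏ a ∈ A, y a) * ∏ b ∈ Λ \ A, y b = ∏ a ∈ Λ, y a := by
      rw [mul_comm, Finset.prod_sdiff hA']
    rw [mul_sub, mul_one, mul_assoc, this]
  have hfull : ∑ B ∈ Λ.powerset, f B = ∑ A ∈ Λ.powerset, x A * ∏ a ∈ A, y a := by
    have : ∀ B ∈ Λ.powerset, f B = ∑ C ∈ B.powerset,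
        x C * ((∏ a ∈ B, y a) * ∏ a ∈ Λ \ B, (1 - y a)) := by
      intro B hB
      rw [hf]
      simp only []
      rw [hz B (Finset.mem_powerset.mp hB), Finset.sum_mul, Finset.sum_mul]
      exact Finset.sum_congr rfl fun C _ => by ring
    rw [Finset.sum_congr rfl this]
    rw [Finset.sum_comm' (s' := fun C => Λ.powerset.filter (fun B => C ⊆ B))
      (t' := Λ.powerset) (by
        intro B C
        simp only [Finset.mem_powerset, Finset.mem_filter]
        constructor
        · rintro ⟨h1, h2⟩; exact ⟨⟨h1, h2⟩, h2.trans h1⟩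
        · rintro ⟨⟨h1, h2⟩, _⟩; exact ⟨h1, h2⟩)]
    refine Finset.sum_congr rfl fun C hC => ?_
    rw [← Finset.mul_sum, aux_inner Λ C (Finset.mem_powerset.mp hC) y]
  have hz0 : f ∅ = 0 := by
    rw [hf]; simp only []
    rw [hz ∅ (Finset.empty_subset Λ)]
    simp [hx0]
  have hstep1 : ∑ B ∈ Λ.powerset.filter (fun B => B ≠ ∅ ∧ B ≠ Λ), f B
      = ∑ B ∈ Λ.powerset.filter (fun B => B ≠ Λ), f B := by
    refine Finset.sum_subset ?_ ?_
    · intro B hB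
      simp only [Finset.mem_filter] at hB ⊢
      exact ⟨hB.1, hB.2.2⟩
    intro B hB hB'
    simp only [Finset.mem_filter, not_and, not_not] at hB hB'
    have : B = ∅ := by by_contra h; exact hB.2 (hB' hB.1 h)
    rw [this]; exact hz0
  have hstep2 : ∑ B ∈ Λ.powerset.filter (fun B => B ≠ Λ), f B
      = ∑ B ∈ Λ.powerset, f B - f Λ := by
    rw [Finset.filter_ne', Finset.sum_erase_eq_sub (Finset.mem_powerset_self Λ)]
  rw [hLHS, hstep1, hstep2, hfull]
  congr 1
  rw [hf]; simp
end

section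
/- Let Λ be a finite set and let f̂ : {A : A ⊆ Λ} → ℝ. Define f : {0,1}^Λ → ℝ by f(η) = ∑_{A⊆Λ} f̂(A) ∏_{x∈A} η(x) (empty product = 1). Then f is monotone with respect to the pointwise partial order on {0,1}^Λ (η ≤ ζ iff η(x) ≤ ζ(x) for all x ∈ Λ) if and only if for every pair of subsets B₁ ⊆ B₂ ⊆ Λ one has ∑_{A ⊆ B₂, A ∩ (B₂∖B₁) ≠ ∅} f̂(A) ≥ 0. -/
open Finset

private lemma f_eq_powerset_sum {ι : Type*} [Fintype ι] [DecidableEq ι]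
    (fhat : Finset ι → ℝ) (η : ι → Bool) :
    ∑ A : Finset ι, fhat A * ∏ x ∈ A, (if η x then (1 : ℝ) else 0)
      = ∑ A ∈ (Finset.univ.filter (fun x => η x = true)).powerset, fhat A := by
  have hps : (Finset.univ.filter (fun x => η x = true)).powerset
      = Finset.univ.filter (fun A => A ⊆ Finset.univ.filter (fun x => η x = true)) := by
    ext A; simp
  rw [hps, Finset.sum_filter]
  · apply Finset.sum_congr rfl
    intro A _
    by_cases h : A ⊆ Finset.univ.filter (fun x => η x = true)
    · have hp : ∀ x ∈ A, η x = true := by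
        intro x hx
        simpa using h hx
      rw [if_pos h]
      rw [Finset.prod_congr rfl (fun x hx => by rw [if_pos (hp x hx)]), Finset.prod_const_one,
        mul_one]
    · rw [if_neg h]
      obtain ⟨x, hx, hxm⟩ := Finset.not_subset.mp h
      have hxn : η x ≠ true := by simpa using hxm
      rw [Finset.prod_eq_zero hx (by simp [hxn]), mul_zero]

private lemma filter_eq_sdiff {ι : Type*} [DecidableEq ι] (B₁ B₂ : Finset ι) (h : B₁ ⊆ B₂) :
    B₂.powerset.filter (fun A => (A ∩ (B₂ \ B₁)).Nonempty)
      = B₂.powerset \ B₁.powerset := by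
  ext A
  simp only [Finset.mem_filter, Finset.mem_sdiff, Finset.mem_powerset]
  constructor
  · rintro ⟨hA, x, hx⟩
    simp only [Finset.mem_inter, Finset.mem_sdiff] at hx
    exact ⟨hA, fun hc => hx.2.2 (hc hx.1)⟩
  · rintro ⟨hA, hnA⟩
    refine ⟨hA, ?_⟩
    obtain ⟨x, hx, hxn⟩ := Finset.not_subset.mp hnA
    exact ⟨x, Finset.mem_inter.mpr ⟨hx, Finset.mem_sdiff.mpr ⟨hA hx, hxn⟩⟩⟩

/-- Lemma 1 of the paper (on the finite configuration space `{0,1}^Λ`, with `Λ` the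
finite index type `ι`): the function `f(η) = ∑_{A ⊆ Λ} f̂(A) ∏_{x ∈ A} η(x)` is
monotone for the pointwise partial order on `{0,1}^Λ` if and only if
`∑_{A ⊆ B₂, A ∩ (B₂∖B₁) ≠ ∅} f̂(A) ≥ 0` for all `B₁ ⊆ B₂ ⊆ Λ`. -/
theorem stretched_exp_lemma1 {ι : Type*} [Fintype ι] [DecidableEq ι]
    (fhat : Finset ι → ℝ) (f : (ι → Bool) → ℝ)
    (hf : ∀ η, f η = ∑ A : Finset ι, fhat A * ∏ x ∈ A, (if η x then (1 : ℝ) else 0)) :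
    (∀ η ζ : ι → Bool, (∀ x, η x ≤ ζ x) → f η ≤ f ζ) ↔
      ∀ B₁ B₂ : Finset ι, B₁ ⊆ B₂ →
        0 ≤ ∑ A ∈ B₂.powerset.filter (fun A => (A ∩ (B₂ \ B₁)).Nonempty), fhat A := by
  have key : ∀ B₁ B₂ : Finset ι, B₁ ⊆ B₂ →
      ∑ A ∈ B₂.powerset.filter (fun A => (A ∩ (B₂ \ B₁)).Nonempty), fhat A
        = (∑ A ∈ B₂.powerset, fhat A) - ∑ A ∈ B₁.powerset, fhat A := by
    intro B₁ B₂ h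
    rw [filter_eq_sdiff B₁ B₂ h, Finset.sum_sdiff_eq_sub (Finset.powerset_mono.mpr h)]
  constructor
  · intro hmono B₁ B₂ h
    set η : ι → Bool := fun x => decide (x ∈ B₁) with hη
    set ζ : ι → Bool := fun x => decide (x ∈ B₂) with hζ
    have hle : ∀ x, η x ≤ ζ x := by
      intro x
      by_cases hx : x ∈ B₁
      · simp [hη, hζ, hx, h hx]
      · simp [hη, hx]
    have := hmono η ζ hle
    rw [hf η, hf ζ, f_eq_powerset_sum, f_eq_powerset_sum] at this
    have e1 : Finset.univ.filter (fun x => η x = true) = B₁ := by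
      ext x; simp [hη]
    have e2 : Finset.univ.filter (fun x => ζ x = true) = B₂ := by
      ext x; simp [hζ]
    rw [e1, e2] at this
    rw [key B₁ B₂ h]
    linarith
  · intro hsum η ζ hle
    set B₁ := Finset.univ.filter (fun x => η x = true) with hB₁
    set B₂ := Finset.univ.filter (fun x => ζ x = true) with hB₂
    have h : B₁ ⊆ B₂ := by
      intro x hx
      simp only [hB₁, hB₂, Finset.mem_filter, Finset.mem_univ, true_and] at hx ⊢
      have := hle x
      rw [hx] at this
      exact (le_antisymm this (Bool.le_true _)).symm
    have := hsum B₁ B₂ h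
    rw [key B₁ B₂ h] at this
    rw [hf η, hf ζ, f_eq_powerset_sum, f_eq_powerset_sum]
    linarith
end
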